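/- Let H be an r-uniform hypergraph on an n-vertex set V that is (q; r, k)-spread, and suppose m_j(S) ≤ q^j |H| for all edges S and j ≥ k. Fix an edge S ∈ H, reals C ≥ 4, p = Cq with p ≤ 1/2 and pn ≥ 2r, an integer t ≤ r, and set w = pn − t. If W' is a uniformly random w-subset of V \ S, then the expected number of edges S' of H with S' ⊆ S ∪ W' and |S' ∩ S| ≥ k is at most 2 (C/2)^{-k} |H| C(w+r, r) / C(n, r). -/

import Mathlib

open Finset

/-- cast of filter-card sum swap: sum over a finset of multiset-filter cards equals
multiset sum of finset-filter cards. -/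
lemma aux_swap {α β : Type*} (𝒲 : Finset β) (H : Multiset α)
    (p : α → β → Prop) [∀ a b, Decidable (p a b)] :
    ∑ b ∈ 𝒲, Multiset.card (H.filter (fun a => p a b)) =
      (H.map (fun a => (𝒲.filter (fun b => p a b)).card)).sum := by
  induction H using Multiset.induction_on with
  | empty => simp
  | cons a H ih =>
    simp only [Multiset.filter_cons, Multiset.map_cons, Multiset.sum_cons, Multiset.card_add,
      Finset.sum_add_distrib, ih]
    congr 1
    rw [Finset.card_filter]
    refine Finset.sum_congr rfl fun b _ => ?_
    split <;> simp

lemma aux_mono {α : Type*} (H : Multiset α) (f g : α → ℕ) (h : ∀ x ∈ H, f x ≤ g x) :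
    (H.map f).sum ≤ (H.map g).sum := by
  induction H using Multiset.induction_on with
  | empty => simp
  | cons a H ih =>
    simp only [Multiset.map_cons, Multiset.sum_cons]
    exact Nat.add_le_add (h a (Multiset.mem_cons_self a H))
      (ih fun x hx => h x (Multiset.mem_cons_of_mem hx))

lemma aux_count {V : Type*} [DecidableEq V] (U A : Finset V) (w : ℕ) (hA : A ⊆ U) :
    ((U.powersetCard w).filter (fun W => A ⊆ W)).card ≤ ((U \ A).card).choose (w - A.card) := by
  rw [← Finset.card_powersetCard]
  apply Finset.card_le_card_of_injOn (fun W => W \ A)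
  · intro W hW
    simp only [Finset.mem_coe, Finset.mem_filter, Finset.mem_powersetCard] at hW
    obtain ⟨⟨hWU, hWcard⟩, hAW⟩ := hW
    rw [Finset.mem_coe, Finset.mem_powersetCard]
    exact ⟨Finset.sdiff_subset_sdiff hWU (Finset.Subset.refl A),
      by rw [Finset.card_sdiff_of_subset hAW, hWcard]⟩
  · intro W1 h1 W2 h2 h
    simp only [Finset.coe_filter, Set.mem_setOf_eq, Finset.mem_powersetCard] at h1 h2
    have h' : W1 \ A = W2 \ A := h
    rw [← Finset.sdiff_union_of_subset h1.2, ← Finset.sdiff_union_of_subset h2.2, h']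

lemma aux_df_choose (n k : ℕ) : n.choose k * k.factorial = n.descFactorial k := by
  rw [Nat.choose_eq_descFactorial_div_factorial]
  exact Nat.div_mul_cancel (Nat.factorial_dvd_descFactorial n k)

lemma aux_df_add (n r w : ℕ) :
    n.descFactorial (r + w) = n.descFactorial r * (n - r).descFactorial w := by
  simp only [Nat.descFactorial_eq_prod_range]
  rw [Finset.prod_range_add]
  exact congrArg _ (Finset.prod_congr rfl fun i _ => by omega)

lemma aux_DF {n r w u : ℕ} (hu : u ≤ r) (hrw : r ≤ w) (hwa : w + r ≤ n - r) :
    w.descFactorial u * n.descFactorial r * w ^ (r - u)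
      ≤ (n - r).descFactorial u * ((w + r).descFactorial r) * (n - r) ^ (r - u) := by
  have hrn : r ≤ n := by omega
  have hL : w.descFactorial u * n.descFactorial r * w ^ (r - u)
      = ∏ i ∈ Finset.range r, ((n - i) * (if i < u then w - i else w)) := by
    rw [Finset.prod_mul_distrib, ← Nat.descFactorial_eq_prod_range]
    rw [← Finset.prod_range_mul_prod_Ico (fun i => if i < u then w - i else w) hu]
    have e1 : ∏ i ∈ Finset.range u, (if i < u then w - i else w) = w.descFactorial u := by
      rw [Nat.descFactorial_eq_prod_range]
      exact Finset.prod_congr rfl fun i hi => by simp [Finset.mem_range.1 hi]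
    have e2 : ∏ i ∈ Finset.Ico u r, (if i < u then w - i else w) = w ^ (r - u) := by
      rw [Finset.prod_congr rfl (fun i hi => if_neg (by simp at hi; omega)),
        Finset.prod_const, Nat.card_Ico]
    rw [e1, e2]; ring
  have hR : (n - r).descFactorial u * ((w + r).descFactorial r) * (n - r) ^ (r - u)
      = ∏ i ∈ Finset.range r, ((w + r - i) * (if i < u then n - r - i else n - r)) := by
    rw [Finset.prod_mul_distrib, ← Nat.descFactorial_eq_prod_range]
    rw [← Finset.prod_range_mul_prod_Ico (fun i => if i < u then n - r - i else n - r) hu]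
    have e1 : ∏ i ∈ Finset.range u, (if i < u then n - r - i else n - r)
        = (n - r).descFactorial u := by
      rw [Nat.descFactorial_eq_prod_range]
      exact Finset.prod_congr rfl fun i hi => by simp [Finset.mem_range.1 hi]
    have e2 : ∏ i ∈ Finset.Ico u r, (if i < u then n - r - i else n - r)
        = (n - r) ^ (r - u) := by
      rw [Finset.prod_congr rfl (fun i hi => if_neg (by simp at hi; omega)),
        Finset.prod_const, Nat.card_Ico]
    rw [e1, e2]; ring
  rw [hL, hR]
  apply Finset.prod_le_prod'
  intro i hi
  have hir : i < r := Finset.mem_range.1 hi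
  by_cases hiu : i < u
  · simp only [if_pos hiu]
    have h1 : i ≤ w := by omega
    have h2 : i ≤ n - r := by omega
    have h3 : i ≤ n := by omega
    zify [h1, h2, h3, hrn, show i ≤ w + r by omega]
    nlinarith [mul_nonneg (show (0:ℤ) ≤ r by positivity)
      (show (0:ℤ) ≤ (n:ℤ) - r - w by omega)]
  · simp only [if_neg hiu]
    have h3 : i ≤ n := by omega
    zify [h3, hrn, show i ≤ w + r by omega]
    nlinarith [mul_nonneg (show (0:ℤ) ≤ (r:ℤ) - i by omega)
      (show (0:ℤ) ≤ (n:ℤ) - r - w by omega)]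

lemma aux_G {n r w u : ℕ} (hu : u ≤ r) (hrw : r ≤ w) (hwa : w + r ≤ n - r) :
    w.choose u * n.choose (w + r) * w ^ (r - u)
      ≤ (n - r).choose u * ((n - r).choose w) * (n - r) ^ (r - u) := by
  have hwle : w ≤ n - r := by omega
  refine Nat.le_of_mul_le_mul_right ?_ (Nat.mul_pos u.factorial_pos (w + r).factorial_pos)
  have hDF := aux_DF hu hrw hwa
  have hDF2 := Nat.mul_le_mul_right ((n - r).descFactorial w) hDF
  calc w.choose u * n.choose (w + r) * w ^ (r - u) * (u.factorial * (w + r).factorial)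
      = (w.choose u * u.factorial) * (n.choose (w + r) * (w + r).factorial) * w ^ (r - u) := by
        ring
    _ = w.descFactorial u * n.descFactorial (w + r) * w ^ (r - u) := by
        rw [aux_df_choose, aux_df_choose]
    _ = w.descFactorial u * n.descFactorial r * w ^ (r - u) * (n - r).descFactorial w := by
        rw [show w + r = r + w from Nat.add_comm w r, aux_df_add]; ring
    _ ≤ (n - r).descFactorial u * ((w + r).descFactorial r) * (n - r) ^ (r - u)
          * (n - r).descFactorial w := hDF2
    _ = ((n - r).choose u * u.factorial) * (((n - r).choose w * w.factorial)
          * (w + r).descFactorial r) * (n - r) ^ (r - u) := by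
        rw [aux_df_choose, aux_df_choose]; ring
    _ = (n - r).choose u * ((n - r).choose w) * (n - r) ^ (r - u)
          * (u.factorial * (w + r).factorial) := by
        have : w.factorial * (w + r).descFactorial r = (w + r).factorial := by
          have := Nat.factorial_mul_descFactorial (show r ≤ w + r by omega)
          rwa [Nat.add_sub_cancel] at this
        rw [← this]; ring

lemma aux_key {n r w u : ℕ} (hu : u ≤ r) (hrw : r ≤ w) (hwa : w + r ≤ n - r) :
    (n - r - u).choose (w - u) * n.choose r * w ^ (r - u)
      ≤ (n - r).choose w * ((w + r).choose r) * (n - r) ^ (r - u) := by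
  have hwle : w ≤ n - r := by omega
  have hun : u ≤ n - r := by omega
  have huw : u ≤ w := by omega
  have hwrn : w + r ≤ n := by omega
  have I1 : (n - r).choose w * w.choose u = (n - r).choose u * ((n - r) - u).choose (w - u) :=
    Nat.choose_mul huw
  have I2 : n.choose (w + r) * (w + r).choose r = n.choose r * (n - r).choose w := by
    have := Nat.choose_mul (n := n) (show r ≤ w + r by omega)
    rwa [Nat.add_sub_cancel] at this
  refine Nat.le_of_mul_le_mul_right ?_
    (Nat.mul_pos (Nat.choose_pos hun) (Nat.choose_pos (Nat.le_add_left r w)))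
  calc (n - r - u).choose (w - u) * n.choose r * w ^ (r - u)
        * ((n - r).choose u * (w + r).choose r)
      = ((n - r).choose u * ((n - r) - u).choose (w - u)) * n.choose r
          * (w + r).choose r * w ^ (r - u) := by ring
    _ = ((n - r).choose w * w.choose u) * n.choose r * (w + r).choose r * w ^ (r - u) := by
        rw [I1]
    _ = (n.choose r * (n - r).choose w) * w.choose u * (w + r).choose r * w ^ (r - u) := by
        ring
    _ = (n.choose (w + r) * (w + r).choose r) * w.choose u * (w + r).choose r
          * w ^ (r - u) := by rw [I2]
    _ = (w.choose u * n.choose (w + r) * w ^ (r - u))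
          * ((w + r).choose r * (w + r).choose r) := by ring
    _ ≤ ((n - r).choose u * ((n - r).choose w) * (n - r) ^ (r - u))
          * ((w + r).choose r * (w + r).choose r) :=
        Nat.mul_le_mul_right _ (aux_G hu hrw hwa)
    _ = (n - r).choose w * ((w + r).choose r) * (n - r) ^ (r - u)
          * ((n - r).choose u * (w + r).choose r) := by ring

lemma aux_geo {x : ℝ} (hx : 0 ≤ x) (hx2 : x ≤ 1/2) (k r : ℕ) :
    ∑ i ∈ Finset.Icc k r, x ^ i ≤ 2 * x ^ k := by
  have hsum : ∀ M : ℕ, ∑ i ∈ Finset.range M, x ^ i ≤ 2 := by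
    intro M
    induction M with
    | zero => norm_num
    | succ M ih =>
      rw [Finset.sum_range_succ']
      have : ∑ i ∈ Finset.range M, x ^ (i + 1) = x * ∑ i ∈ Finset.range M, x ^ i := by
        rw [Finset.mul_sum]; exact Finset.sum_congr rfl fun i _ => by ring
      rw [this]
      have hxs : x * ∑ i ∈ Finset.range M, x ^ i ≤ (1/2) * 2 := by
        apply mul_le_mul hx2 ih (Finset.sum_nonneg fun i _ => pow_nonneg hx i) (by norm_num)
      simp only [pow_zero]
      linarith
  rcases le_or_gt k r with hkr | hkr
  · rw [← Finset.Ico_add_one_right_eq_Icc, Finset.sum_Ico_eq_sum_range]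
    have : ∑ i ∈ Finset.range (r + 1 - k), x ^ (k + i)
        = x ^ k * ∑ i ∈ Finset.range (r + 1 - k), x ^ i := by
      rw [Finset.mul_sum]; exact Finset.sum_congr rfl fun i _ => by rw [pow_add]
    rw [this]
    have := hsum (r + 1 - k)
    nlinarith [pow_nonneg hx k]
  · rw [Finset.Icc_eq_empty (by omega)]
    simp
    positivity

theorem stmt18 {V : Type*} [DecidableEq V] [Fintype V]
    (H : Multiset (Finset V)) (r k n P t w : ℕ) (q C : ℝ) (S : Finset V)
    (hn : n = Fintype.card V) (hq : 0 < q) (hC : 4 ≤ C)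
    (hp : C * q ≤ 1/2) (hPn : (P : ℝ) = C * q * n) (hP2r : 2 * r ≤ P)
    (hk : 1 ≤ k) (hkr : k ≤ r) (ht : t ≤ r) (hw : w = P - t)
    (hne : H ≠ 0) (hunif : ∀ S' ∈ H, S'.card = r) (hS : S ∈ H)
    (hM : ∀ S' ∈ H, ∀ j, k ≤ j →
      ((H.filter (fun T => j ≤ (S' ∩ T).card)).card : ℝ) ≤ q ^ j * H.card)
    (hm : ∀ S' ∈ H, ∀ j, k ≤ j →
      ((H.filter (fun T => (S' ∩ T).card = j)).card : ℝ) ≤ q ^ j * H.card) :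
    (∑ W' ∈ ((univ : Finset V) \ S).powersetCard w,
        ((H.filter (fun S' => S' ⊆ S ∪ W' ∧ k ≤ (S' ∩ S).card)).card : ℝ))
        / ((n - r).choose w)
      ≤ 2 * (C/2) ^ (-(k : ℤ)) * H.card * ((w + r).choose r) / (n.choose r) := by
  classical
  have hSr : S.card = r := hunif S hS
  have hrn : r ≤ n := by rw [hn]; exact hSr ▸ Finset.card_le_univ S
  have hC0 : (0:ℝ) < C := by linarith
  have hn0 : 0 < n := by
    by_contra h
    have hn' : n = 0 := by omega
    have : (P:ℝ) = 0 := by rw [hPn, hn']; simp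
    have hP0 : P = 0 := by exact_mod_cast this
    omega
  have h2Pn : 2 * P ≤ n := by
    have hnn : (0:ℝ) ≤ (n:ℝ) := Nat.cast_nonneg n
    have : 2 * (P:ℝ) ≤ (n:ℝ) := by rw [hPn]; nlinarith
    exact_mod_cast this
  have htP : t ≤ P := by omega
  have hwr : r ≤ w := by omega
  have hwa : w + r ≤ n - r := by omega
  have hw0 : 0 < w := by omega
  have hNcard : ((univ : Finset V) \ S).card = n - r := by
    rw [Finset.card_sdiff_of_subset (Finset.subset_univ S), Finset.card_univ, ← hn, hSr]
  have hD : 0 < ((n - r).choose w) := Nat.choose_pos (by omega)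
  have hD' : (0:ℝ) < ((n - r).choose w : ℝ) := by exact_mod_cast hD
  have hCnr : (0:ℝ) < (n.choose r : ℝ) := by exact_mod_cast Nat.choose_pos hrn
  have hCwr : (0:ℝ) < ((w + r).choose r : ℝ) := by
    exact_mod_cast Nat.choose_pos (Nat.le_add_left r w)
  have hwR : C * q * n / 2 ≤ (w:ℝ) := by
    have hwc : (w:ℝ) = (P:ℝ) - (t:ℝ) := by rw [hw, Nat.cast_sub htP]
    have hrP : 2 * (r:ℝ) ≤ (P:ℝ) := by exact_mod_cast hP2r
    have htr : (t:ℝ) ≤ (r:ℝ) := by exact_mod_cast ht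
    rw [hwc, ← hPn]; linarith
  have hqa : q * ((n - r : ℕ) : ℝ) ≤ 2 / C * w := by
    have h1 : ((n - r : ℕ):ℝ) ≤ (n:ℝ) := by exact_mod_cast Nat.sub_le n r
    have h2 : q * ((n - r : ℕ):ℝ) ≤ q * n := by nlinarith
    have h3 : q * (n:ℝ) ≤ 2 / C * w := by
      rw [div_mul_eq_mul_div, le_div_iff₀ hC0]
      nlinarith
    linarith
  -- abbreviations
  set hh : ℕ → ℕ := fun i => (n - r - (r - i)).choose (w - (r - i)) with hhdef
  set 𝒲 := ((univ : Finset V) \ S).powersetCard w with h𝒲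
  rw [div_le_iff₀ hD', ← Nat.cast_sum]
  -- Step A : swap and bound by per-edge counts
  have hswap := aux_swap 𝒲 H (fun S' W' => S' ⊆ S ∪ W' ∧ k ≤ (S' ∩ S).card)
  have hbound : ∀ S' ∈ H,
      (𝒲.filter (fun W' => S' ⊆ S ∪ W' ∧ k ≤ (S' ∩ S).card)).card ≤
        (if k ≤ (S' ∩ S).card then hh ((S' ∩ S).card) else 0) := by
    intro S' hS'
    by_cases hcase : k ≤ (S' ∩ S).card
    · rw [if_pos hcase]
      have hfe : 𝒲.filter (fun W' => S' ⊆ S ∪ W' ∧ k ≤ (S' ∩ S).card)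
          = 𝒲.filter (fun W' => S' \ S ⊆ W') := by
        apply Finset.filter_congr
        intro W' _
        simp only [hcase, and_true]
        constructor
        · intro hsub x hx
          obtain ⟨hxS', hxnS⟩ := Finset.mem_sdiff.1 hx
          rcases Finset.mem_union.1 (hsub hxS') with h' | h'
          · exact absurd h' hxnS
          · exact h'
        · intro hsub x hx
          by_cases hxS : x ∈ S
          · exact Finset.mem_union.2 (Or.inl hxS)
          · exact Finset.mem_union.2 (Or.inr (hsub (Finset.mem_sdiff.2 ⟨hx, hxS⟩)))
      rw [hfe]
      have hsub : S' \ S ⊆ ((univ : Finset V) \ S) := fun x hx =>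
        Finset.mem_sdiff.2 ⟨Finset.mem_univ x, (Finset.mem_sdiff.1 hx).2⟩
      have hcnt := aux_count ((univ : Finset V) \ S) (S' \ S) w hsub
      have hcardS' : (S' \ S).card = r - (S' ∩ S).card := by
        have hps := Finset.card_sdiff_add_card_inter S' S
        rw [hunif S' hS'] at hps
        omega
      rw [Finset.card_sdiff_of_subset hsub, hNcard, hcardS'] at hcnt
      exact hcnt
    · rw [if_neg hcase]
      have he : 𝒲.filter (fun W' => S' ⊆ S ∪ W' ∧ k ≤ (S' ∩ S).card) = ∅ :=
        Finset.filter_false_of_mem (fun W' _ hc => hcase hc.2)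
      simp [he]
  have hstepA : (∑ W' ∈ 𝒲, (H.filter (fun S' => S' ⊆ S ∪ W' ∧ k ≤ (S' ∩ S).card)).card)
      ≤ (H.map (fun S' => if k ≤ (S' ∩ S).card then hh ((S' ∩ S).card) else 0)).sum := by
    rw [hswap]; exact aux_mono H _ _ hbound
  -- Step B : regroup by intersection size
  set J := H.map (fun S' => (S' ∩ S).card) with hJ
  have hregroup : (H.map (fun S' => if k ≤ (S' ∩ S).card then hh ((S' ∩ S).card) else 0)).sum
      = ∑ i ∈ J.toFinset, (Multiset.count i J) * (if k ≤ i then hh i else 0) := by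
    have hc : (fun S' : Finset V => if k ≤ (S' ∩ S).card then hh ((S' ∩ S).card) else 0)
        = (fun i => if k ≤ i then hh i else 0) ∘ (fun S' => (S' ∩ S).card) := rfl
    rw [hc, ← Multiset.map_map, hJ, Finset.sum_multiset_map_count]
    simp [smul_eq_mul]
  have hcount : ∀ i, k ≤ i → ((Multiset.count i J : ℕ) : ℝ) ≤ q ^ i * H.card := by
    intro i hi
    rw [hJ, Multiset.count_map]
    have hmi := hm S hS i hi
    have heq : H.filter (fun S' => i = (S' ∩ S).card)
        = H.filter (fun T => (S ∩ T).card = i) := by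
      apply Multiset.filter_congr
      intro T _
      rw [Finset.inter_comm S T]
      exact eq_comm
    rw [heq]
    exact hmi
  have hmemJ : ∀ i ∈ J.toFinset, i ≤ r := by
    intro i hi
    rw [Multiset.mem_toFinset, hJ] at hi
    obtain ⟨S', hS', rfl⟩ := Multiset.mem_map.1 hi
    calc (S' ∩ S).card ≤ S'.card := Finset.card_le_card Finset.inter_subset_left
      _ = r := hunif S' hS'
  -- per-index key bound
  have hterm : ∀ i, k ≤ i → i ≤ r → q ^ i * (hh i : ℝ)
      ≤ ((w + r).choose r : ℝ) * ((n - r).choose w : ℝ) / (n.choose r : ℝ) * (2/C) ^ i := by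
    intro i hik hir
    have hkey := aux_key (n := n) (r := r) (w := w) (u := r - i)
      (show r - i ≤ r by omega) hwr hwa
    rw [show r - (r - i) = i by omega] at hkey
    have hkeyR : (hh i : ℝ) * (n.choose r : ℝ) * (w:ℝ) ^ i
        ≤ ((n - r).choose w : ℝ) * ((w + r).choose r : ℝ) * ((n - r : ℕ) : ℝ) ^ i := by
      exact_mod_cast hkey
    have hw0R : (0:ℝ) < (w:ℝ) := by exact_mod_cast hw0
    have hstep : (hh i : ℝ) * (n.choose r : ℝ) * (w:ℝ) ^ i * q ^ i
        ≤ ((n - r).choose w : ℝ) * ((w + r).choose r : ℝ) * ((2/C) ^ i * (w:ℝ) ^ i) := by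
      calc (hh i : ℝ) * (n.choose r : ℝ) * (w:ℝ) ^ i * q ^ i
          ≤ ((n - r).choose w : ℝ) * ((w + r).choose r : ℝ) * ((n - r : ℕ) : ℝ) ^ i * q ^ i :=
            mul_le_mul_of_nonneg_right hkeyR (pow_nonneg hq.le i)
        _ = ((n - r).choose w : ℝ) * ((w + r).choose r : ℝ) * (q * ((n - r : ℕ) : ℝ)) ^ i := by
            rw [mul_pow]; ring
        _ ≤ ((n - r).choose w : ℝ) * ((w + r).choose r : ℝ) * ((2/C) * (w:ℝ)) ^ i := by
            apply mul_le_mul_of_nonneg_left (pow_le_pow_left₀ (by positivity) hqa i)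
              (by positivity)
        _ = ((n - r).choose w : ℝ) * ((w + r).choose r : ℝ) * ((2/C) ^ i * (w:ℝ) ^ i) := by
            rw [mul_pow]
    have h2 : (hh i : ℝ) * (n.choose r : ℝ) * q ^ i
        ≤ ((n - r).choose w : ℝ) * ((w + r).choose r : ℝ) * (2/C) ^ i := by
      have hwp : (0:ℝ) < (w:ℝ) ^ i := by positivity
      apply le_of_mul_le_mul_right _ hwp
      calc (hh i : ℝ) * (n.choose r : ℝ) * q ^ i * (w:ℝ) ^ i
          = (hh i : ℝ) * (n.choose r : ℝ) * (w:ℝ) ^ i * q ^ i := by ring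
        _ ≤ ((n - r).choose w : ℝ) * ((w + r).choose r : ℝ) * ((2/C) ^ i * (w:ℝ) ^ i) := hstep
        _ = ((n - r).choose w : ℝ) * ((w + r).choose r : ℝ) * (2/C) ^ i * (w:ℝ) ^ i := by ring
    rw [div_mul_eq_mul_div, le_div_iff₀ hCnr]
    calc q ^ i * (hh i : ℝ) * (n.choose r : ℝ)
        = (hh i : ℝ) * (n.choose r : ℝ) * q ^ i := by ring
      _ ≤ ((n - r).choose w : ℝ) * ((w + r).choose r : ℝ) * (2/C) ^ i := h2
      _ = ((w + r).choose r : ℝ) * ((n - r).choose w : ℝ) * (2/C) ^ i := by ring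
  -- chain of sums in ℝ
  have hchain : ((∑ W' ∈ 𝒲,
        (H.filter (fun S' => S' ⊆ S ∪ W' ∧ k ≤ (S' ∩ S).card)).card : ℕ) : ℝ)
      ≤ (H.card : ℝ) * (((w + r).choose r : ℝ) * ((n - r).choose w : ℝ) / (n.choose r : ℝ))
          * (2 * (2/C) ^ k) := by
    have hc1 : ((∑ W' ∈ 𝒲,
        (H.filter (fun S' => S' ⊆ S ∪ W' ∧ k ≤ (S' ∩ S).card)).card : ℕ) : ℝ)
        ≤ ((∑ i ∈ J.toFinset, (Multiset.count i J) * (if k ≤ i then hh i else 0) : ℕ) : ℝ) := by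
      exact_mod_cast le_of_le_of_eq hstepA hregroup
    have hc2 : ((∑ i ∈ J.toFinset, (Multiset.count i J) * (if k ≤ i then hh i else 0) : ℕ) : ℝ)
        = ∑ i ∈ J.toFinset, (Multiset.count i J : ℝ) * (if k ≤ i then (hh i : ℝ) else 0) := by
      push_cast [apply_ite (Nat.cast : ℕ → ℝ)]
      rfl
    have hc3 : ∑ i ∈ J.toFinset, (Multiset.count i J : ℝ) * (if k ≤ i then (hh i : ℝ) else 0)
        = ∑ i ∈ J.toFinset.filter (fun i => k ≤ i), (Multiset.count i J : ℝ) * (hh i : ℝ) := by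
      rw [Finset.sum_filter]
      exact Finset.sum_congr rfl fun i _ => by split <;> simp
    have hc4 : ∑ i ∈ J.toFinset.filter (fun i => k ≤ i), (Multiset.count i J : ℝ) * (hh i : ℝ)
        ≤ ∑ i ∈ J.toFinset.filter (fun i => k ≤ i), q ^ i * (H.card : ℝ) * (hh i : ℝ) := by
      apply Finset.sum_le_sum
      intro i hi
      have hik := (Finset.mem_filter.1 hi).2
      exact mul_le_mul_of_nonneg_right (hcount i hik) (Nat.cast_nonneg _)
    have hc5 : ∑ i ∈ J.toFinset.filter (fun i => k ≤ i), q ^ i * (H.card : ℝ) * (hh i : ℝ)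
        ≤ ∑ i ∈ Finset.Icc k r, q ^ i * (H.card : ℝ) * (hh i : ℝ) := by
      apply Finset.sum_le_sum_of_subset_of_nonneg
      · intro i hi
        obtain ⟨hiJ, hik⟩ := Finset.mem_filter.1 hi
        exact Finset.mem_Icc.2 ⟨hik, hmemJ i hiJ⟩
      · intro i _ _
        positivity
    have hc6 : ∑ i ∈ Finset.Icc k r, q ^ i * (H.card : ℝ) * (hh i : ℝ)
        ≤ ∑ i ∈ Finset.Icc k r, (H.card : ℝ)
            * (((w + r).choose r : ℝ) * ((n - r).choose w : ℝ) / (n.choose r : ℝ) * (2/C) ^ i) := by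
      apply Finset.sum_le_sum
      intro i hi
      obtain ⟨hik, hir⟩ := Finset.mem_Icc.1 hi
      have := hterm i hik hir
      calc q ^ i * (H.card : ℝ) * (hh i : ℝ) = (H.card : ℝ) * (q ^ i * (hh i : ℝ)) := by ring
        _ ≤ (H.card : ℝ)
            * (((w + r).choose r : ℝ) * ((n - r).choose w : ℝ) / (n.choose r : ℝ) * (2/C) ^ i) :=
          mul_le_mul_of_nonneg_left this (Nat.cast_nonneg _)
    have hc7 : ∑ i ∈ Finset.Icc k r, (H.card : ℝ)
            * (((w + r).choose r : ℝ) * ((n - r).choose w : ℝ) / (n.choose r : ℝ) * (2/C) ^ i)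
        ≤ (H.card : ℝ) * (((w + r).choose r : ℝ) * ((n - r).choose w : ℝ) / (n.choose r : ℝ))
            * (2 * (2/C) ^ k) := by
      have hgeo := aux_geo (x := 2/C) (by positivity) (by rw [div_le_div_iff₀ hC0] <;> linarith) k r
      have hfac : (0:ℝ) ≤ (H.card : ℝ)
          * (((w + r).choose r : ℝ) * ((n - r).choose w : ℝ) / (n.choose r : ℝ)) := by positivity
      calc ∑ i ∈ Finset.Icc k r, (H.card : ℝ)
            * (((w + r).choose r : ℝ) * ((n - r).choose w : ℝ) / (n.choose r : ℝ) * (2/C) ^ i)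
          = (H.card : ℝ) * (((w + r).choose r : ℝ) * ((n - r).choose w : ℝ) / (n.choose r : ℝ))
              * ∑ i ∈ Finset.Icc k r, (2/C) ^ i := by
            rw [Finset.mul_sum]
            exact Finset.sum_congr rfl fun i _ => by ring
        _ ≤ _ := mul_le_mul_of_nonneg_left hgeo hfac
    calc ((∑ W' ∈ 𝒲,
        (H.filter (fun S' => S' ⊆ S ∪ W' ∧ k ≤ (S' ∩ S).card)).card : ℕ) : ℝ)
        ≤ _ := hc1
      _ = _ := hc2
      _ = _ := hc3
      _ ≤ _ := hc4
      _ ≤ _ := hc5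
      _ ≤ _ := hc6
      _ ≤ _ := hc7
  -- conclude
  have hzpow : (C/2 : ℝ) ^ (-(k : ℤ)) = (2/C) ^ k := by
    rw [zpow_neg, zpow_natCast, ← inv_pow, inv_div]
  calc ((∑ W' ∈ 𝒲,
        (H.filter (fun S' => S' ⊆ S ∪ W' ∧ k ≤ (S' ∩ S).card)).card : ℕ) : ℝ)
      ≤ (H.card : ℝ) * (((w + r).choose r : ℝ) * ((n - r).choose w : ℝ) / (n.choose r : ℝ))
          * (2 * (2/C) ^ k) := hchain
    _ = 2 * (C/2) ^ (-(k : ℤ)) * (H.card : ℝ) * ((w + r).choose r : ℝ) / (n.choose r : ℝ)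
          * ((n - r).choose w : ℝ) := by rw [hzpow]; ring
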